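/- For a > 0 let L(a) := [[−a, −a⁻¹],[0, −a⁻¹]] and R(a) := [[a, 0],[a, a⁻¹]] be real 2×2 matrices. Then for every n ≥ 1, every choice of positive reals a₁,…,a_n and every choice, for each i, of the factor Mᵢ ∈ {L(aᵢ), R(aᵢ)}, the product M := M₁M₂⋯M_n satisfies: every entry of (−1)^k·M is nonnegative and both diagonal entries of (−1)^k·M are strictly positive, where k is the number of indices i with Mᵢ of type L. In particular the trace of M is nonzero and its sign equals (−1)^k. -/

import Mathlib

/- STATEMENT 14: sign of products of left/right turn matrices in SL(2,ℝ):
every entry of (−1)^k·M₁⋯M_n is nonnegative, the diagonal entries are positive,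
and the sign of the trace is (−1)^k where k is the number of left turns. -/

noncomputable section

/-- The left-turn matrix L(a). -/
def Lmat (a : ℝ) : Matrix (Fin 2) (Fin 2) ℝ := !![-a, -a⁻¹; 0, -a⁻¹]

/-- The right-turn matrix R(a). -/
def Rmat (a : ℝ) : Matrix (Fin 2) (Fin 2) ℝ := !![a, 0; a, a⁻¹]

/-- Auxiliary predicate: all entries nonnegative and diagonal entries positive. -/
def PosMat (A : Matrix (Fin 2) (Fin 2) ℝ) : Prop :=
  (∀ i j, 0 ≤ A i j) ∧ 0 < A 0 0 ∧ 0 < A 1 1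

lemma posMat_one : PosMat 1 := by
  refine ⟨fun i j => ?_, by norm_num, by norm_num⟩
  fin_cases i <;> fin_cases j <;> norm_num

lemma posMat_mul {A B : Matrix (Fin 2) (Fin 2) ℝ} (hA : PosMat A) (hB : PosMat B) :
    PosMat (A * B) := by
  obtain ⟨hA0, hA1, hA2⟩ := hA
  obtain ⟨hB0, hB1, hB2⟩ := hB
  refine ⟨fun i j => ?_, ?_, ?_⟩
  · rw [Matrix.mul_apply]
    exact Finset.sum_nonneg fun m _ => mul_nonneg (hA0 _ _) (hB0 _ _)
  · rw [Matrix.mul_apply, Fin.sum_univ_two]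
    have := mul_pos hA1 hB1
    nlinarith [mul_nonneg (hA0 0 1) (hB0 1 0)]
  · rw [Matrix.mul_apply, Fin.sum_univ_two]
    have := mul_pos hA2 hB2
    nlinarith [mul_nonneg (hA0 1 0) (hB0 0 1)]

lemma posMat_prod (l : List (Matrix (Fin 2) (Fin 2) ℝ)) (h : ∀ A ∈ l, PosMat A) :
    PosMat l.prod := by
  induction l with
  | nil => simpa using posMat_one
  | cons A l ih =>
    rw [List.prod_cons]
    exact posMat_mul (h A List.mem_cons_self) (ih fun B hB => h B (List.mem_cons_of_mem _ hB))

lemma smul_list_prod (l : List (ℝ × Matrix (Fin 2) (Fin 2) ℝ)) :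
    (l.map fun p => p.1 • p.2).prod = (l.map Prod.fst).prod • (l.map Prod.snd).prod := by
  induction l with
  | nil => simp
  | cons p l ih =>
    simp only [List.map_cons, List.prod_cons, ih, smul_mul_assoc, mul_smul_comm, smul_smul]
    rw [mul_comm]

theorem stmt14 (n : ℕ) (hn : 1 ≤ n)
    (a : Fin n → ℝ) (ha : ∀ i, 0 < a i)
    (c : Fin n → Bool)
    (M : Fin n → Matrix (Fin 2) (Fin 2) ℝ)
    (hM : ∀ i, M i = if c i then Lmat (a i) else Rmat (a i))
    (k : ℕ) (hk : k = (Finset.univ.filter fun i => c i = true).card)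
    (P : Matrix (Fin 2) (Fin 2) ℝ) (hP : P = (List.ofFn M).prod) :
    (∀ i j, 0 ≤ (-1 : ℝ) ^ k * P i j) ∧
    (0 < (-1 : ℝ) ^ k * P 0 0) ∧ (0 < (-1 : ℝ) ^ k * P 1 1) ∧
    Matrix.trace P ≠ 0 ∧ 0 < (-1 : ℝ) ^ k * Matrix.trace P := by
  set s : Fin n → ℝ := fun i => if c i then (-1 : ℝ) else 1 with hs
  set N : Fin n → Matrix (Fin 2) (Fin 2) ℝ := fun i => s i • M i with hN
  -- each signed factor is positive
  have hNpos : ∀ A ∈ List.ofFn N, PosMat A := by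
    intro A hA
    rw [List.mem_ofFn] at hA
    obtain ⟨i, rfl⟩ := hA
    have hai := ha i
    have hai' : 0 < (a i)⁻¹ := inv_pos.mpr hai
    simp only [hN, hs, hM i]
    by_cases hc : c i
    · simp only [hc, if_true]
      refine ⟨fun p q => ?_, ?_, ?_⟩ <;>
        first
          | (fin_cases p <;> fin_cases q <;>
              simp [Lmat, Matrix.smul_apply] <;> positivity)
          | (simp [Lmat, Matrix.smul_apply]; positivity)
    · simp only [hc, if_false]
      refine ⟨fun p q => ?_, ?_, ?_⟩ <;>
        first
          | (fin_cases p <;> fin_cases q <;>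
              simp [Rmat, Matrix.smul_apply] <;> positivity)
          | (simp [Rmat, Matrix.smul_apply]; positivity)
  have hQpos : PosMat (List.ofFn N).prod := posMat_prod _ hNpos
  -- relate the signed product to (-1)^k • P
  have hsignprod : (List.ofFn s).prod = (-1 : ℝ) ^ k := by
    rw [List.prod_ofFn, hs, hk]
    rw [Finset.prod_ite, Finset.prod_const, Finset.prod_const, one_pow, mul_one]
  have hfactor : (List.ofFn N).prod = ((-1 : ℝ) ^ k) • P := by
    have h1 : List.ofFn N = (List.ofFn (fun i => (s i, M i))).map fun p => p.1 • p.2 := by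
      simp only [List.map_ofFn]; rfl
    have h2 : (List.ofFn (fun i => (s i, M i))).map Prod.fst = List.ofFn s := by
      simp only [List.map_ofFn]; rfl
    have h3 : (List.ofFn (fun i => (s i, M i))).map Prod.snd = List.ofFn M := by
      simp only [List.map_ofFn]; rfl
    rw [h1, smul_list_prod, h2, h3, hsignprod, hP]
  obtain ⟨h0, h1, h2⟩ := hQpos
  have key : ∀ i j, (List.ofFn N).prod i j = (-1 : ℝ) ^ k * P i j := by
    intro i j; rw [hfactor]; simp [Matrix.smul_apply, smul_eq_mul]
  have h0' : ∀ i j, 0 ≤ (-1 : ℝ) ^ k * P i j := fun i j => key i j ▸ h0 i j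
  have h1' : 0 < (-1 : ℝ) ^ k * P 0 0 := key 0 0 ▸ h1
  have h2' : 0 < (-1 : ℝ) ^ k * P 1 1 := key 1 1 ▸ h2
  have htr : 0 < (-1 : ℝ) ^ k * Matrix.trace P := by
    have : Matrix.trace P = P 0 0 + P 1 1 := by
      simp [Matrix.trace, Fin.sum_univ_two, Matrix.diag]
    rw [this, mul_add]
    exact add_pos h1' h2'
  refine ⟨h0', h1', h2', ?_, htr⟩
  intro h
  rw [h, mul_zero] at htr
  exact lt_irrefl 0 htr
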